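/- Let f(s) = a₄s⁴ + a₃s³ + a₂s² + a₁s + a₀ be a real quartic polynomial with all coefficients aᵢ > 0. Then f has no roots with strictly positive real part if and only if a₁(a₂a₃ − a₁a₄) − a₀a₃² ≥ 0. -/
import Mathlib

lemma self_quad (z : ℂ) : z^2 + ((-2*z.re : ℝ):ℂ)*z + ((Complex.normSq z : ℝ):ℂ) = 0 := by
  have h1 : z + (starRingEnd ℂ) z = 2*(z.re:ℂ) := by
    rw [Complex.add_conj]; push_cast; rfl
  have h2 : z * (starRingEnd ℂ) z = ((Complex.normSq z : ℝ):ℂ) := Complex.mul_conj z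
  push_cast
  linear_combination z * h1 - h2

lemma extract (E₂ E₁ : ℝ) (z : ℂ) (hz0 : z ≠ 0) (him : z.im ≠ 0)
    (h : (E₂:ℂ)*z^2 + (E₁:ℂ)*z = 0) : E₂ = 0 ∧ E₁ = 0 := by
  have h' : ((E₂:ℂ)*z + (E₁:ℂ)) * z = 0 := by linear_combination h
  rcases mul_eq_zero.1 h' with h'' | h''
  · have hre : E₂ * z.im = 0 := by
      have := congrArg Complex.im h''
      simpa using this
    have hE₂ : E₂ = 0 := by
      rcases mul_eq_zero.1 hre with h3 | h3
      · exact h3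
      · exact absurd h3 him
    refine ⟨hE₂, ?_⟩
    rw [hE₂] at h''
    have : (E₁:ℂ) = 0 := by simpa using h''
    exact_mod_cast this
  · exact absurd h'' hz0

open Polynomial in
lemma root_cubic (b₂ b₁ b₀ : ℂ) : ∃ w : ℂ, w^3 + b₂*w^2 + b₁*w + b₀ = 0 := by
  have hd : (0:WithBot ℕ) < (X^3 + C b₂ * X^2 + C b₁ * X + C b₀ : ℂ[X]).degree := by
    have h1 : ((X:ℂ[X])^3).degree = 3 := degree_X_pow 3
    have h2 : (C b₂ * X^2 + C b₁ * X + C b₀ : ℂ[X]).degree < 3 := degree_quadratic_lt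
    rw [add_assoc, add_assoc, ← add_assoc (C b₂ * X^2),
      degree_add_eq_left_of_degree_lt (by rw [h1]; exact h2), h1]
    norm_num
  obtain ⟨w, hw⟩ := Complex.exists_root hd
  exact ⟨w, by simpa [Polynomial.IsRoot] using hw⟩

open Polynomial in
lemma root_quartic (b₃ b₂ b₁ b₀ : ℂ) : ∃ w : ℂ, w^4 + b₃*w^3 + b₂*w^2 + b₁*w + b₀ = 0 := by
  have hd : (0:WithBot ℕ) < (X^4 + C b₃ * X^3 + C b₂ * X^2 + C b₁ * X + C b₀ : ℂ[X]).degree := by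
    have h1 : ((X:ℂ[X])^4).degree = 4 := degree_X_pow 4
    have h2 : (C b₃ * X^3 + C b₂ * X^2 + C b₁ * X + C b₀ : ℂ[X]).degree < 4 := degree_cubic_lt
    rw [add_assoc, add_assoc, add_assoc, ← add_assoc (C b₃ * X^3), ← add_assoc (C b₃ * X^3 + C b₂ * X^2),
      degree_add_eq_left_of_degree_lt (by rw [h1]; exact h2), h1]
    norm_num
  obtain ⟨w, hw⟩ := Complex.exists_root hd
  exact ⟨w, by simpa [Polynomial.IsRoot] using hw⟩

/-- A real monic quartic with nonzero constant term factors into two monic real quadratics. -/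
lemma quartic_factor (A₃ A₂ A₁ A₀ : ℝ) (h0 : A₀ ≠ 0) :
    ∃ p q r t : ℝ, A₃ = p + r ∧ A₂ = q + t + p*r ∧ A₁ = p*t + q*r ∧ A₀ = q*t := by
  obtain ⟨z, hz⟩ := root_quartic (A₃:ℂ) (A₂:ℂ) (A₁:ℂ) (A₀:ℂ)
  have hz0 : z ≠ 0 := by
    intro h
    rw [h] at hz
    simp at hz
    exact h0 (by exact_mod_cast hz)
  by_cases him : z.im = 0
  · -- z is real
    set x : ℝ := z.re with hxdef
    have hzx : z = (x:ℂ) := Complex.ext rfl him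
    have hx0 : x ≠ 0 := fun h => hz0 (by rw [hzx, h]; simp)
    have hx : x^4 + A₃*x^3 + A₂*x^2 + A₁*x + A₀ = 0 := by
      rw [hzx] at hz
      exact_mod_cast hz
    set b₂ : ℝ := A₃ + x with hb2
    set b₁ : ℝ := A₂ + x*b₂ with hb1
    set b₀ : ℝ := A₁ + x*b₁ with hb0
    have hrem : A₀ + x*b₀ = 0 := by rw [hb0, hb1, hb2]; linear_combination hx
    have hbne : b₀ ≠ 0 := by
      intro h; rw [h] at hrem; simp at hrem; exact h0 hrem
    obtain ⟨w, hw⟩ := root_cubic (b₂:ℂ) (b₁:ℂ) (b₀:ℂ)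
    have hw0 : w ≠ 0 := by
      intro h
      rw [h] at hw
      simp at hw
      exact hbne (by exact_mod_cast hw)
    by_cases wim : w.im = 0
    · -- cubic has real root y
      set y : ℝ := w.re with hydef
      have hwy : w = (y:ℂ) := Complex.ext rfl wim
      have hy : y^3 + b₂*y^2 + b₁*y + b₀ = 0 := by
        rw [hwy] at hw
        exact_mod_cast hw
      refine ⟨b₂ + y, b₁ + y*(b₂+y), -(x+y), x*y, ?_, ?_, ?_, ?_⟩
      · rw [hb2]; ring
      · rw [hb1, hb2]; ring
      · linear_combination hy - hb0
      · linear_combination hrem - x*hy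
    · -- cubic has nonreal root w
      set p : ℝ := -2*w.re with hpdef
      set q : ℝ := Complex.normSq w with hqdef
      have hq0 : q ≠ 0 := fun h => hw0 (Complex.normSq_eq_zero.1 h)
      set c : ℝ := b₀ / q with hcdef
      have hqc : b₀ = q * c := by rw [hcdef]; field_simp
      have hwq : w^2 + (p:ℂ)*w + (q:ℂ) = 0 := by
        rw [hpdef, hqdef]; push_cast [self_quad w]; exact_mod_cast self_quad w
      have key : ((b₂ - (p + c) : ℝ):ℂ)*w^2 + ((b₁ - (q + p*c) : ℝ):ℂ)*w = 0 := by
        have hqc' : (b₀:ℂ) = (q:ℂ)*(c:ℂ) := by exact_mod_cast hqc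
        push_cast
        linear_combination hw - (w + (c:ℂ)) * hwq - hqc'
      obtain ⟨hE₂, hE₁⟩ := extract _ _ w hw0 wim key
      refine ⟨p, q, c - x, -(x*c), ?_, ?_, ?_, ?_⟩
      · -- A₃ = p + (c - x) ; b₂ = A₃ + x = p + c
        linarith [hE₂]
      · -- A₂ = q + (-(x*c)) + p*(c-x) ; b₁ = A₂ + x*b₂ = q + p*c
        linear_combination hE₁ - hb1 - x*hE₂
      · -- A₁ = p*(-(x*c)) + q*(c-x) ; b₀ = A₁ + x*b₁ = q*c
        have h2 : b₁ = q + p*c := by linarith [hE₁]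
        have hA1 : A₁ = b₀ - x*b₁ := by rw [hb0]; ring
        rw [hA1, hqc, h2]; ring
      · -- A₀ = q*(-(x*c)) ; A₀ = -x*b₀ = -x*q*c
        have : A₀ = -(x*b₀) := by linarith [hrem]
        rw [this, hqc]; ring
  · -- z nonreal
    set p : ℝ := -2*z.re with hpdef
    set q : ℝ := Complex.normSq z with hqdef
    have hq0 : q ≠ 0 := fun h => hz0 (Complex.normSq_eq_zero.1 h)
    set r : ℝ := A₃ - p with hrdef
    set t : ℝ := A₀ / q with htdef
    have hqt : A₀ = q * t := by rw [htdef]; field_simp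
    have hzq : z^2 + (p:ℂ)*z + (q:ℂ) = 0 := by
      rw [hpdef, hqdef]; exact_mod_cast self_quad z
    have key : ((A₂ - (q + t + p*r) : ℝ):ℂ)*z^2 + ((A₁ - (p*t + q*r) : ℝ):ℂ)*z = 0 := by
      have hqt' : (A₀:ℂ) = (q:ℂ)*(t:ℂ) := by exact_mod_cast hqt
      have hr' : (r:ℂ) = (A₃:ℂ) - (p:ℂ) := by rw [hrdef]; push_cast; ring
      push_cast
      linear_combination hz - (z^2 + (r:ℂ)*z + (t:ℂ)) * hzq - hqt' + z^3 * hr'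
    obtain ⟨hE₂, hE₁⟩ := extract _ _ z hz0 him key
    exact ⟨p, q, r, t, by rw [hrdef]; ring, by linarith, by linarith, hqt⟩


/-- A monic quadratic with `p ≥ 0`, `q > 0` has all roots with nonpositive real part. -/
lemma quad_stable (p q : ℝ) (hp : 0 ≤ p) (hq : 0 < q) (s : ℂ)
    (h : s^2 + (p:ℂ)*s + (q:ℂ) = 0) : s.re ≤ 0 := by
  by_contra hx
  push_neg at hx
  obtain ⟨x, y⟩ := s
  simp only [Complex.ext_iff, pow_two, Complex.add_re, Complex.add_im, Complex.mul_re,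
    Complex.mul_im, Complex.ofReal_re, Complex.ofReal_im, Complex.zero_re, Complex.zero_im] at h hx
  obtain ⟨hre, him⟩ := h
  have him' : y * (2*x + p) = 0 := by linarith [him]
  have hy : y = 0 := by
    rcases mul_eq_zero.1 him' with h1 | h1
    · exact h1
    · nlinarith
  rw [hy] at hre
  nlinarith
/-- A monic quadratic with `q < 0`, or `q > 0` and `p < 0`, has a root with positive real part. -/
lemma quad_unstable (p q : ℝ) (hq : q ≠ 0) (h : q < 0 ∨ p < 0) :
    ∃ s : ℂ, s^2 + (p:ℂ)*s + (q:ℂ) = 0 ∧ 0 < s.re := by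
  rcases lt_or_gt_of_ne hq with hq | hq
  · -- q < 0 : real root (−p + √(p²−4q))/2 > 0
    set d : ℝ := p^2 - 4*q with hd
    have hd0 : 0 ≤ d := by nlinarith
    have hsq : Real.sqrt d ^ 2 = d := Real.sq_sqrt hd0
    have hgt : |p| < Real.sqrt d := by
      rw [← Real.sqrt_sq_eq_abs]
      exact Real.sqrt_lt_sqrt (sq_nonneg p) (by nlinarith)
    set x : ℝ := (-p + Real.sqrt d)/2 with hxd
    have hroot : x^2 + p*x + q = 0 := by
      rw [hxd]; nlinarith [hsq]
    refine ⟨(x:ℂ), ?_, ?_⟩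
    · exact_mod_cast congrArg (Complex.ofReal) hroot
    · have : p ≤ |p| := le_abs_self p
      simp only [Complex.ofReal_re]
      rw [hxd]; linarith
  · -- q > 0, p < 0
    have hp : p < 0 := h.resolve_left (by linarith)
    rcases le_or_gt (p^2 - 4*q) 0 with hdle | hdpos
    · -- complex roots, real part -p/2 > 0
      set y : ℝ := Real.sqrt (q - p^2/4) with hyd
      have hy0 : 0 ≤ q - p^2/4 := by nlinarith
      have hsq : y^2 = q - p^2/4 := Real.sq_sqrt hy0
      refine ⟨⟨-p/2, y⟩, ?_, by simp; linarith⟩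
      simp only [Complex.ext_iff, pow_two, Complex.add_re, Complex.add_im, Complex.mul_re,
        Complex.mul_im, Complex.ofReal_re, Complex.ofReal_im, Complex.zero_re, Complex.zero_im]
      constructor
      · nlinarith [hsq]
      · ring
    · -- real roots, both positive
      set d : ℝ := p^2 - 4*q with hd
      have hd0 : 0 ≤ d := le_of_lt hdpos
      have hsq : Real.sqrt d ^ 2 = d := Real.sq_sqrt hd0
      set x : ℝ := (-p + Real.sqrt d)/2 with hxd
      have hroot : x^2 + p*x + q = 0 := by
        rw [hxd]; nlinarith [hsq]
      refine ⟨(x:ℂ), ?_, ?_⟩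
      · exact_mod_cast congrArg (Complex.ofReal) hroot
      · have := Real.sqrt_nonneg d
        simp only [Complex.ofReal_re]
        rw [hxd]; linarith

/-- Routh–Hurwitz for a quartic with positive coefficients:
no roots with strictly positive real part iff `a₁(a₂a₃ - a₁a₄) - a₀a₃² ≥ 0`. -/
theorem stmt_1 (a₀ a₁ a₂ a₃ a₄ : ℝ)
    (h₀ : 0 < a₀) (h₁ : 0 < a₁) (h₂ : 0 < a₂) (h₃ : 0 < a₃) (h₄ : 0 < a₄) :
    (∀ s : ℂ, (a₄ : ℂ) * s ^ 4 + (a₃ : ℂ) * s ^ 3 + (a₂ : ℂ) * s ^ 2 +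
        (a₁ : ℂ) * s + (a₀ : ℂ) = 0 → s.re ≤ 0) ↔
    0 ≤ a₁ * (a₂ * a₃ - a₁ * a₄) - a₀ * a₃ ^ 2 := by
  have ha₄ : a₄ ≠ 0 := ne_of_gt h₄
  obtain ⟨p, q, r, t, e3, e2, e1, e0⟩ :=
    quartic_factor (a₃/a₄) (a₂/a₄) (a₁/a₄) (a₀/a₄) (div_ne_zero (ne_of_gt h₀) ha₄)
  have v3 : a₃ = (p + r) * a₄ := (div_eq_iff ha₄).1 e3
  have v2 : a₂ = (q + t + p*r) * a₄ := (div_eq_iff ha₄).1 e2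
  have v1 : a₁ = (p*t + q*r) * a₄ := (div_eq_iff ha₄).1 e1
  have v0 : a₀ = (q*t) * a₄ := (div_eq_iff ha₄).1 e0
  have hqt : 0 < q * t := by nlinarith
  have hprsum : 0 < p + r := by nlinarith
  have hptqr : 0 < p*t + q*r := by nlinarith
  have hq0 : q ≠ 0 := by intro h; rw [h] at hqt; simp at hqt
  have ht0 : t ≠ 0 := by intro h; rw [h] at hqt; simp at hqt
  -- factorization of the quartic over ℂ
  have hfact : ∀ s : ℂ, (a₄ : ℂ) * s ^ 4 + (a₃ : ℂ) * s ^ 3 + (a₂ : ℂ) * s ^ 2 +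
      (a₁ : ℂ) * s + (a₀ : ℂ)
      = (a₄:ℂ) * ((s^2 + (p:ℝ)*s + (q:ℝ)) * (s^2 + (r:ℝ)*s + (t:ℝ))) := by
    intro s
    have c3 : (a₃:ℂ) = ((p:ℂ) + r) * a₄ := by exact_mod_cast congrArg Complex.ofReal v3
    have c2 : (a₂:ℂ) = ((q:ℂ) + t + p*r) * a₄ := by exact_mod_cast congrArg Complex.ofReal v2
    have c1 : (a₁:ℂ) = ((p:ℂ)*t + q*r) * a₄ := by exact_mod_cast congrArg Complex.ofReal v1
    have c0 : (a₀:ℂ) = ((q:ℂ)*t) * a₄ := by exact_mod_cast congrArg Complex.ofReal v0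
    linear_combination s^3 * c3 + s^2 * c2 + s * c1 + c0
  -- the Routh–Hurwitz quantity
  have hdelta : a₁ * (a₂ * a₃ - a₁ * a₄) - a₀ * a₃ ^ 2
      = (a₄^3 * ((q - t)^2 + (p + r) * (p*t + q*r))) * (p * r) := by
    rw [v3, v2, v1, v0]; ring
  have hB : 0 < a₄^3 * ((q - t)^2 + (p + r) * (p*t + q*r)) := by
    have : 0 < (q - t)^2 + (p + r) * (p*t + q*r) :=
      add_pos_of_nonneg_of_pos (sq_nonneg _) (mul_pos hprsum hptqr)
    positivity
  have hiff : (0 ≤ a₁ * (a₂ * a₃ - a₁ * a₄) - a₀ * a₃ ^ 2) ↔ 0 ≤ p * r := by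
    rw [hdelta]
    exact mul_nonneg_iff_of_pos_left hB
  rw [hiff]
  constructor
  · -- stable ⇒ 0 ≤ p*r
    intro hstab
    by_contra hpr
    push_neg at hpr
    rcases lt_or_ge p 0 with hp | hp
    · obtain ⟨s, hs, hspos⟩ := quad_unstable p q hq0 (Or.inr hp)
      have : s.re ≤ 0 := hstab s (by rw [hfact s, hs]; ring)
      linarith
    · have hrneg : r < 0 := by nlinarith
      obtain ⟨s, hs, hspos⟩ := quad_unstable r t ht0 (Or.inr hrneg)
      have : s.re ≤ 0 := hstab s (by rw [hfact s, hs]; ring)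
      linarith
  · -- 0 ≤ p*r ⇒ stable
    intro hpr s hs
    have hp : 0 ≤ p := by
      by_contra hp
      push_neg at hp
      nlinarith [mul_pos (by linarith : (0:ℝ) < -p) hprsum]
    have hr : 0 ≤ r := by
      by_contra hr
      push_neg at hr
      nlinarith [mul_pos (by linarith : (0:ℝ) < -r) hprsum]
    have hqpos : 0 < q := by
      rcases lt_or_gt_of_ne hq0 with hqneg | hqpos
      · have htneg : t < 0 := by
          by_contra h
          push_neg at h
          have : q * t ≤ 0 := mul_nonpos_iff.2 (Or.inr ⟨hqneg.le, h⟩)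
          linarith
        have hh1 : p * t ≤ 0 := mul_nonpos_iff.2 (Or.inl ⟨hp, htneg.le⟩)
        have hh2 : q * r ≤ 0 := mul_nonpos_iff.2 (Or.inr ⟨hqneg.le, hr⟩)
        linarith
      · exact hqpos
    have htpos : 0 < t := by
      rcases mul_pos_iff.1 hqt with ⟨_, h'⟩ | ⟨h', _⟩
      · exact h'
      · linarith
    have := hfact s
    rw [hs] at this
    rcases mul_eq_zero.1 this.symm with h' | h'
    · exact absurd h' (Complex.ofReal_ne_zero.2 ha₄)
    · rcases mul_eq_zero.1 h' with h'' | h''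
      · exact quad_stable p q hp hqpos s h''
      · exact quad_stable r t hr htpos s h''
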